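/- For Re(s) > 0 and reals a > 0, t > 0, one has t^{-s} = (1/Γ(s/2)) [ Γ(s/2, a t²) t^{-s} + ∫_0^a x^{s/2−1} e^{−t² x} dx ], where Γ(s,z) is the upper incomplete gamma function; consequently, for a sequence t_n > 0 with ∑ t_n^{-s} convergent, Z(s) = ∑_n Γ(s/2, a t_n²)/(Γ(s/2) t_n^s) + (1/Γ(s/2)) ∫_0^a x^{s/2−1} ∑_n e^{−t_n² x} dx. -/

import Mathlib

open Filter Topology

/-- The upper incomplete gamma function `Γ(s, x) = ∫_x^∞ u^{s−1} e^{−u} du`. -/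
noncomputable def upperGamma (s : ℂ) (x : ℝ) : ℂ :=
  ∫ u in Set.Ioi x, (u : ℂ) ^ (s - 1) * Real.exp (-u)

namespace Stmt18Aux
open MeasureTheory Set

lemma hg_int {w : ℂ} (hw : 0 < w.re) :
    IntegrableOn (fun u : ℝ => (u : ℂ) ^ (w - 1) * (Real.exp (-u) : ℂ)) (Set.Ioi 0) := by
  have := Complex.GammaIntegral_convergent hw
  exact this.congr_fun (fun x _ => mul_comm _ _) measurableSet_Ioi

lemma Gamma_split {w : ℂ} (hw : 0 < w.re) {X : ℝ} (hX : 0 < X) :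
    Complex.Gamma w =
      (∫ u in Set.Ioc 0 X, (u : ℂ) ^ (w - 1) * (Real.exp (-u) : ℂ)) + upperGamma w X := by
  rw [Complex.Gamma_eq_integral hw, Complex.GammaIntegral]
  have h1 : (∫ x in Set.Ioi (0:ℝ), (Real.exp (-x) : ℂ) * (x:ℂ) ^ (w - 1))
      = ∫ u in Set.Ioi (0:ℝ), (u : ℂ) ^ (w - 1) * (Real.exp (-u) : ℂ) :=
    setIntegral_congr_fun measurableSet_Ioi fun x _ => mul_comm _ _
  rw [h1, ← Set.Ioc_union_Ioi_eq_Ioi hX.le,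
    setIntegral_union (Set.Ioc_disjoint_Ioi le_rfl) measurableSet_Ioi
      ((hg_int hw).mono_set Set.Ioc_subset_Ioi_self)
      ((hg_int hw).mono_set (Set.Ioi_subset_Ioi hX.le))]
  rfl


lemma tpow_eq {t : ℝ} (ht : 0 < t) (w : ℂ) :
    ((t^2 : ℝ) : ℂ) ^ (-w) = (t : ℂ) ^ (-(2 * w)) := by
  have hlog : (Complex.log (t : ℂ) * 2).im = 0 := by
    rw [← Complex.ofReal_log ht.le]; simp
  have h := Complex.cpow_mul (x := (t : ℂ)) (y := 2) (-w)
    (by rw [hlog]; exact neg_lt_zero.mpr Real.pi_pos)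
    (by rw [hlog]; exact Real.pi_pos.le)
  have h2 : ((t : ℂ)) ^ (2 : ℂ) = ((t^2 : ℝ) : ℂ) := by
    rw [show (2:ℂ) = ((2:ℕ):ℂ) by norm_num, Complex.cpow_natCast]
    push_cast; ring
  rw [show -(2*w) = 2 * (-w) by ring, h, h2]

lemma subst_lemma (w : ℂ) {a t : ℝ} (ha : 0 < a) (ht : 0 < t) :
    (∫ x in (0:ℝ)..a, (x:ℂ)^(w-1) * Complex.exp (-(t:ℂ)^2 * x))
      = (t:ℂ)^(-(2*w)) * ∫ u in (0:ℝ)..(a * t^2), (u:ℂ)^(w-1) * (Real.exp (-u) : ℂ) := by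
  have hc : (0:ℝ) < t^2 := by positivity
  have hcne : ((t^2 : ℝ) : ℂ) ≠ 0 := by exact_mod_cast hc.ne'
  have key : EqOn (fun x : ℝ => (x:ℂ)^(w-1) * Complex.exp (-(t:ℂ)^2 * x))
      (fun x : ℝ => ((t^2:ℝ):ℂ)^(1-w) *
        ((((t^2*x : ℝ)):ℂ)^(w-1) * (Real.exp (-(t^2*x)) : ℂ))) (Set.uIcc 0 a) := by
    intro x hx
    rw [Set.uIcc_of_le ha.le] at hx
    have hx0 : 0 ≤ x := hx.1
    have he : Complex.exp (-(t:ℂ)^2 * x) = (Real.exp (-(t^2*x)) : ℂ) := by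
      rw [Complex.ofReal_exp]; push_cast; ring_nf
    have hm : (((t^2*x : ℝ)):ℂ)^(w-1) = ((t^2:ℝ):ℂ)^(w-1) * (x:ℂ)^(w-1) := by
      rw [Complex.ofReal_mul]
      exact Complex.mul_cpow_ofReal_nonneg hc.le hx0 _
    simp only [hm, he]
    rw [show ((t^2:ℝ):ℂ)^(1-w) * (((t^2:ℝ):ℂ)^(w-1) * (x:ℂ)^(w-1) * (Real.exp (-(t^2*x)) : ℂ))
        = (((t^2:ℝ):ℂ)^(1-w) * ((t^2:ℝ):ℂ)^(w-1)) * ((x:ℂ)^(w-1) * (Real.exp (-(t^2*x)) : ℂ))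
      by ring, ← Complex.cpow_add _ _ hcne]
    norm_num
  rw [intervalIntegral.integral_congr key, intervalIntegral.integral_const_mul]
  have hcomp := intervalIntegral.integral_comp_mul_left
    (a := (0:ℝ)) (b := a) (fun u : ℝ => ((u:ℂ))^(w-1) * (Real.exp (-u) : ℂ)) (c := t^2) hc.ne'
  simp only [mul_zero] at hcomp
  rw [hcomp, Complex.real_smul, Complex.ofReal_inv, mul_comm (t^2) a, ← mul_assoc]
  congr 1
  rw [← Complex.cpow_neg_one, ← Complex.cpow_add _ _ hcne,
    show (1 - w + -1 : ℂ) = -w by ring, tpow_eq ht]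

lemma real_bound {σ a t : ℝ} (hσ : 0 < σ) (ha : 0 < a) (ht : 0 < t) :
    ∫ x in Set.Ioc 0 a, x^(σ-1) * Real.exp (-(t^2*x)) ≤ t^(-(2*σ)) * Real.Gamma σ := by
  have hc : (0:ℝ) < t^2 := by positivity
  have hgint : IntegrableOn (fun u : ℝ => u^(σ-1) * Real.exp (-u)) (Set.Ioi 0) :=
    (Real.GammaIntegral_convergent hσ).congr_fun (fun x _ => mul_comm _ _) measurableSet_Ioi
  have key : EqOn (fun x : ℝ => x^(σ-1) * Real.exp (-(t^2*x)))
      (fun x : ℝ => (t^2)^(1-σ) * ((t^2*x)^(σ-1) * Real.exp (-(t^2*x)))) (Set.uIcc 0 a) := by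
    intro x hx
    rw [Set.uIcc_of_le ha.le] at hx
    have hm : (t^2*x)^(σ-1) = (t^2)^(σ-1) * x^(σ-1) := Real.mul_rpow hc.le hx.1
    simp only [hm]
    rw [show (t^2)^(1-σ) * ((t^2)^(σ-1) * x^(σ-1) * Real.exp (-(t^2*x)))
        = ((t^2)^(1-σ) * (t^2)^(σ-1)) * (x^(σ-1) * Real.exp (-(t^2*x))) by ring,
      ← Real.rpow_add hc]
    norm_num
  rw [← intervalIntegral.integral_of_le ha.le, intervalIntegral.integral_congr key,
    intervalIntegral.integral_const_mul]
  have hcomp := intervalIntegral.integral_comp_mul_left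
    (a := (0:ℝ)) (b := a) (fun u : ℝ => u^(σ-1) * Real.exp (-u)) (c := t^2) hc.ne'
  simp only [mul_zero] at hcomp
  rw [hcomp, smul_eq_mul, ← mul_assoc, ← Real.rpow_neg_one (t^2), ← Real.rpow_add hc,
    show (1 - σ + -1 : ℝ) = -σ by ring]
  have hco : (t^2)^(-σ) = t^(-(2*σ)) := by
    rw [← Real.rpow_natCast t 2, ← Real.rpow_mul ht.le]
    norm_num
  rw [hco, mul_comm (t^2) a, intervalIntegral.integral_of_le (by positivity)]
  have hle : ∫ u in Set.Ioc 0 (a*t^2), u^(σ-1) * Real.exp (-u)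
      ≤ ∫ u in Set.Ioi (0:ℝ), u^(σ-1) * Real.exp (-u) := by
    refine setIntegral_mono_set hgint ?_ (HasSubset.Subset.eventuallyLE Set.Ioc_subset_Ioi_self)
    filter_upwards [ae_restrict_mem measurableSet_Ioi] with u hu
    exact mul_nonneg (Real.rpow_nonneg (le_of_lt hu) _) (Real.exp_pos _).le
  have hΓ : Real.Gamma σ = ∫ u in Set.Ioi (0:ℝ), u^(σ-1) * Real.exp (-u) := by
    rw [Real.Gamma_eq_integral hσ]
    exact setIntegral_congr_fun measurableSet_Ioi fun x _ => mul_comm _ _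
  rw [hΓ]
  exact mul_le_mul_of_nonneg_left hle (Real.rpow_nonneg ht.le _)

lemma F_norm {w : ℂ} {x : ℝ} (c : ℝ) (hx : 0 < x) :
    ‖(x:ℂ)^(w-1) * Complex.exp (-(c:ℂ)*x)‖ = x^(w.re-1) * Real.exp (-(c*x)) := by
  rw [norm_mul,
    Complex.norm_cpow_eq_rpow_re_of_pos hx, Complex.norm_exp]
  rw [show -(c:ℂ)*x = ((-(c*x) : ℝ) : ℂ) by push_cast; ring, Complex.ofReal_re,
    Complex.sub_re, Complex.one_re]

lemma F_integrable {w : ℂ} (hw : 0 < w.re) {a : ℝ} (ha : 0 < a) {c : ℝ} (hc : 0 ≤ c) :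
    IntegrableOn (fun x : ℝ => (x:ℂ)^(w-1) * Complex.exp (-(c:ℂ)*x)) (Set.Ioc 0 a) := by
  have hcont : ContinuousOn (fun x : ℝ => (x:ℂ)^(w-1) * Complex.exp (-(c:ℂ)*x)) (Set.Ioc 0 a) := by
    apply ContinuousOn.mul
    · apply continuousOn_of_forall_continuousAt
      intro x hx
      exact (continuousAt_cpow_const (Complex.ofReal_mem_slitPlane.2 hx.1)).comp
        Complex.continuous_ofReal.continuousAt
    · exact (Complex.continuous_exp.comp (by continuity)).continuousOn
  have hmeas : AEStronglyMeasurable (fun x : ℝ => (x:ℂ)^(w-1) * Complex.exp (-(c:ℂ)*x)) (volume.restrict (Set.Ioc 0 a)) := hcont.aestronglyMeasurable measurableSet_Ioc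
  have hgint : IntegrableOn (fun x : ℝ => x ^ (w.re - 1)) (Set.Ioc 0 a) := by
    rw [← intervalIntegrable_iff_integrableOn_Ioc_of_le ha.le]
    exact intervalIntegral.intervalIntegrable_rpow' (by linarith)
  refine Integrable.mono hgint hmeas ?_
  filter_upwards [ae_restrict_mem measurableSet_Ioc] with x hx
  rw [F_norm c hx.1]
  calc x^(w.re-1) * Real.exp (-(c*x)) ≤ x^(w.re-1) * 1 := by
        apply mul_le_mul_of_nonneg_left _ (Real.rpow_nonneg hx.1.le _)
        exact Real.exp_le_one_iff.2 (by nlinarith [hx.1.le])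
    _ ≤ ‖x^(w.re-1)‖ := by rw [mul_one, Real.norm_eq_abs, abs_of_nonneg (Real.rpow_nonneg hx.1.le _)]


end Stmt18Aux

open Stmt18Aux MeasureTheory Set in
theorem stmt18 (s : ℂ) (hs : 0 < s.re) (a : ℝ) (ha : 0 < a)
    (t : ℕ → ℝ) (htpos : ∀ n, 0 < t n) (htop : Tendsto t atTop atTop)
    (hsum : Summable (fun n : ℕ => ((t n : ℂ)) ^ (-s))) :
    (∀ τ : ℝ, 0 < τ →
      ((τ : ℂ)) ^ (-s) = (1 / Complex.Gamma (s / 2)) *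
        (upperGamma (s / 2) (a * τ ^ 2) * ((τ : ℂ)) ^ (-s)
          + ∫ x in (0 : ℝ)..a, (x : ℂ) ^ (s / 2 - 1) * Complex.exp (-(τ : ℂ) ^ 2 * x))) ∧
    (∑' n : ℕ, ((t n : ℂ)) ^ (-s))
      = (∑' n : ℕ, upperGamma (s / 2) (a * (t n) ^ 2) / (Complex.Gamma (s / 2) * ((t n : ℂ)) ^ s))
        + (1 / Complex.Gamma (s / 2)) *
          ∫ x in (0 : ℝ)..a, (x : ℂ) ^ (s / 2 - 1) * ∑' n : ℕ, (Real.exp (-(t n) ^ 2 * x) : ℂ) := by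
  have hre : (s/2).re = s.re/2 := by
    rw [Complex.div_re]
    simp [Complex.normSq]
    ring
  have hw : 0 < (s/2).re := by rw [hre]; linarith
  have hG : Complex.Gamma (s/2) ≠ 0 := Complex.Gamma_ne_zero_of_re_pos hw
  -- Part 1
  have claim1 : ∀ τ : ℝ, 0 < τ →
      ((τ : ℂ)) ^ (-s) = (1 / Complex.Gamma (s / 2)) *
        (upperGamma (s / 2) (a * τ ^ 2) * ((τ : ℂ)) ^ (-s)
          + ∫ x in (0 : ℝ)..a, (x : ℂ) ^ (s / 2 - 1) * Complex.exp (-(τ : ℂ) ^ 2 * x)) := by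
    intro τ hτ
    have hX : 0 < a * τ^2 := by positivity
    have key : (∫ x in (0:ℝ)..a, (x:ℂ)^(s/2-1) * Complex.exp (-(τ:ℂ)^2*x))
        = (τ:ℂ)^(-s) * (Complex.Gamma (s/2) - upperGamma (s/2) (a*τ^2)) := by
      rw [subst_lemma (s/2) ha hτ, show -(2*(s/2)) = -s by ring,
        intervalIntegral.integral_of_le hX.le]
      rw [Gamma_split hw hX]
      ring
    rw [key]
    field_simp
    ring
  refine ⟨claim1, ?_⟩
  -- Part 2
  set σ : ℝ := s.re with hσdef
  have hσ2 : 0 < σ/2 := by positivity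
  set w : ℂ := s/2 with hwdef
  set F : ℕ → ℝ → ℂ := fun n x => (x:ℂ)^(w-1) * Complex.exp (-((((t n)^2 : ℝ)):ℂ)*x) with hF
  set B : ℕ → ℂ := fun n => ∫ x in Set.Ioc 0 a, F n x with hBdef
  set G : ℂ := Complex.Gamma (s/2) with hGdef
  set A : ℕ → ℂ := fun n => upperGamma (s/2) (a * (t n)^2) / (G * ((t n : ℂ)) ^ s) with hAdef
  have hFint : ∀ n, IntegrableOn (F n) (Set.Ioc 0 a) := fun n =>
    F_integrable hw ha (sq_nonneg (t n))
  have hnormint : ∀ n, (∫ x in Set.Ioc 0 a, ‖F n x‖)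
      = ∫ x in Set.Ioc 0 a, x^(σ/2-1) * Real.exp (-((t n)^2*x)) := by
    intro n
    refine setIntegral_congr_fun measurableSet_Ioc fun x hx => ?_
    rw [hF]
    rw [F_norm _ hx.1, hwdef, hre]
  have hbound : ∀ n, (∫ x in Set.Ioc 0 a, ‖F n x‖) ≤ (t n)^(-σ) * Real.Gamma (σ/2) := by
    intro n
    rw [hnormint n]
    have := real_bound hσ2 ha (htpos n)
    rwa [show -(2*(σ/2)) = -σ by ring] at this
  have hsummable_rpow : Summable (fun n => (t n)^(-σ)) := by
    have h1 := hsum.norm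
    refine h1.congr fun n => ?_
    rw [Complex.norm_cpow_eq_rpow_re_of_pos (htpos n), Complex.neg_re]
  have hsummable_bd : Summable (fun n => (t n)^(-σ) * Real.Gamma (σ/2)) :=
    hsummable_rpow.mul_right _
  have hB_norm : ∀ n, ‖B n‖ ≤ (t n)^(-σ) * Real.Gamma (σ/2) := fun n =>
    (norm_integral_le_integral_norm _).trans (hbound n)
  have hBsum : Summable B := Summable.of_norm_bounded hsummable_bd hB_norm
  have htsum_lint : (∑' n, ∫⁻ x in Set.Ioc 0 a, ‖F n x‖₊) ≠ ⊤ := by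
    have h1 : ∀ n, (∫⁻ x in Set.Ioc 0 a, ‖F n x‖₊)
        = ENNReal.ofReal (∫ x in Set.Ioc 0 a, ‖F n x‖) := fun n =>
      (ofReal_integral_norm_eq_lintegral_enorm (hFint n)).symm
    have h2 : (∑' n, ∫⁻ x in Set.Ioc 0 a, ‖F n x‖₊)
        ≤ ENNReal.ofReal (∑' n, (t n)^(-σ) * Real.Gamma (σ/2)) := by
      rw [ENNReal.ofReal_tsum_of_nonneg
        (fun n => mul_nonneg (Real.rpow_nonneg (htpos n).le _) ((Real.Gamma_pos_of_pos hσ2).le))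
        hsummable_bd]
      refine ENNReal.tsum_le_tsum fun n => ?_
      rw [h1 n]
      exact ENNReal.ofReal_le_ofReal (hbound n)
    exact ne_top_of_le_ne_top ENNReal.ofReal_ne_top h2
  have hswap : (∫ x in Set.Ioc 0 a, ∑' n, F n x) = ∑' n, B n :=
    integral_tsum (fun n => (hFint n).aestronglyMeasurable) htsum_lint
  have hid : ∀ n, ((t n : ℂ)) ^ (-s) = A n + (1/G) * B n := by
    intro n
    have h1 := claim1 (t n) (htpos n)
    have hτne : ((t n : ℝ) : ℂ) ≠ 0 := by exact_mod_cast (htpos n).ne'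
    have hts : ((t n : ℝ) : ℂ)^s ≠ 0 := by
      rw [Complex.cpow_def_of_ne_zero hτne]; exact Complex.exp_ne_zero _
    have hInt : (∫ x in (0:ℝ)..a, (x:ℂ)^(s/2-1) * Complex.exp (-((t n : ℝ):ℂ)^2*x)) = B n := by
      rw [intervalIntegral.integral_of_le ha.le, hBdef]
      refine setIntegral_congr_fun measurableSet_Ioc fun x hx => ?_
      rw [hF, hwdef, show -((t n:ℝ):ℂ)^2 * (x:ℂ) = -((((t n)^2:ℝ)):ℂ) * x by push_cast; ring]
    rw [hInt] at h1
    have hneg : ((t n : ℝ) : ℂ)^(-s) = (((t n : ℝ) : ℂ)^s)⁻¹ := Complex.cpow_neg _ _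
    rw [h1, hAdef, hGdef, hneg]
    field_simp
    ring
  have hA : Summable A := by
    have := hsum.sub (hBsum.mul_left (1/G))
    refine this.congr fun n => ?_
    rw [hid n]; ring
  have htheta : ∀ x : ℝ, (∑' n, F n x)
      = (x:ℂ)^(s/2-1) * ∑' n : ℕ, (Real.exp (-(t n)^2 * x) : ℂ) := by
    intro x
    rw [hwdef] at hF
    rw [show (∑' n, F n x) = ∑' n, (x:ℂ)^(s/2-1) * (Real.exp (-(t n)^2 * x) : ℂ) from
      tsum_congr fun n => by rw [hF]; rw [Complex.ofReal_exp]; push_cast; ring_nf]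
    exact tsum_mul_left
  calc (∑' n : ℕ, ((t n : ℂ)) ^ (-s)) = ∑' n, (A n + (1/G) * B n) := tsum_congr hid
    _ = (∑' n, A n) + ∑' n, (1/G) * B n := Summable.tsum_add hA (hBsum.mul_left _)
    _ = (∑' n, A n) + (1/G) * ∑' n, B n := by rw [tsum_mul_left]
    _ = _ := by
        rw [hGdef, ← hswap, show (∫ x in Set.Ioc 0 a, ∑' n, F n x)
            = ∫ x in (0:ℝ)..a, (x:ℂ)^(s/2-1) * ∑' n : ℕ, (Real.exp (-(t n)^2 * x) : ℂ) by
          rw [intervalIntegral.integral_of_le ha.le]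
          exact setIntegral_congr_fun measurableSet_Ioc fun x _ => htheta x]
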